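/- Let A be a real n×n matrix, b > 0 a real number, and suppose every eigenvalue λ ∈ ℂ of A (viewed as a complex matrix) satisfies |λ| < b. Then there exists a real symmetric positive definite matrix P with P − I positive semidefinite such that b²P − AᵀPA is positive semidefinite. -/

import Mathlib

open Matrix Filter
open scoped ENNReal NNReal

attribute [local instance] Matrix.linftyOpNormedRing Matrix.linftyOpNormedAlgebra

private lemma dot_mulVec_sum {n : ℕ} {ι : Type*} (s : Finset ι)
    (M : ι → Matrix (Fin n) (Fin n) ℝ) (x y : Fin n → ℝ) :
    x ⬝ᵥ (∑ k ∈ s, M k) *ᵥ y = ∑ k ∈ s, x ⬝ᵥ (M k) *ᵥ y := by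
  classical
  induction s using Finset.induction_on with
  | empty => simp
  | insert _ _ h ih =>
      rw [Finset.sum_insert h, Finset.sum_insert h, Matrix.add_mulVec, dotProduct_add, ih]

private lemma quad_bound {n : ℕ} (hn : 0 < n) (M : Matrix (Fin n) (Fin n) ℝ) {d : ℝ}
    (h : ∀ i j, (n : ℝ) * |M i j| ≤ d) (x : Fin n → ℝ) :
    (M *ᵥ x) ⬝ᵥ (M *ᵥ x) ≤ d ^ 2 * (x ⬝ᵥ x) := by
  have hn' : (0:ℝ) < n := by exact_mod_cast hn
  set S := ∑ j, |x j| with hS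
  have hrow : ∀ i, |(M *ᵥ x) i| ≤ (d / n) * S := by
    intro i
    have e : (M *ᵥ x) i = ∑ j, M i j * x j := by
      simp [Matrix.mulVec, dotProduct]
    calc |(M *ᵥ x) i| = |∑ j, M i j * x j| := by rw [e]
      _ ≤ ∑ j, |M i j * x j| := Finset.abs_sum_le_sum_abs _ _
      _ ≤ ∑ j, (d / n) * |x j| := by
          apply Finset.sum_le_sum
          intro j _
          rw [abs_mul]
          have hM : |M i j| ≤ d / n := by
            rw [le_div_iff₀ hn']
            have := h i j; nlinarith [abs_nonneg (M i j)]
          exact mul_le_mul_of_nonneg_right hM (abs_nonneg _)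
      _ = (d / n) * S := by rw [← Finset.mul_sum]
  have hSsq : S ^ 2 ≤ (n : ℝ) * (x ⬝ᵥ x) := by
    have h1 := sq_sum_le_card_mul_sum_sq (s := (Finset.univ : Finset (Fin n)))
      (f := fun j => |x j|)
    simp only [Finset.card_univ, Fintype.card_fin, sq_abs] at h1
    calc S ^ 2 ≤ (n:ℝ) * ∑ j, x j ^ 2 := h1
      _ = (n:ℝ) * (x ⬝ᵥ x) := by simp [dotProduct, sq]
  have hQ : 0 ≤ x ⬝ᵥ x := by
    simp only [dotProduct]
    exact Finset.sum_nonneg fun i _ => mul_self_nonneg _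
  have hdn : 0 ≤ d / n := by
    obtain ⟨i⟩ := Fin.pos_iff_nonempty.mp hn
    have := h i i
    have := abs_nonneg (M i i)
    have hd : 0 ≤ d := by nlinarith
    positivity
  calc (M *ᵥ x) ⬝ᵥ (M *ᵥ x) = ∑ i, (M *ᵥ x) i * (M *ᵥ x) i := by
        simp [dotProduct]
    _ ≤ ∑ _i : Fin n, ((d / n) * S) ^ 2 := by
        apply Finset.sum_le_sum
        intro i _
        have h2 := abs_le.mp (hrow i)
        nlinarith [h2.1, h2.2]
    _ = (n : ℝ) * ((d / n) * S) ^ 2 := by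
        rw [Finset.sum_const, Finset.card_univ, Fintype.card_fin, nsmul_eq_mul]
    _ ≤ d ^ 2 * (x ⬝ᵥ x) := by
        have hd2 : (d / n) ^ 2 * (n:ℝ) ^ 2 = d ^ 2 := by field_simp
        nlinarith [mul_le_mul_of_nonneg_left hSsq (by positivity : (0:ℝ) ≤ (n:ℝ) * (d/n)^2)]

private lemma exists_good_power {n : ℕ} (hn : 0 < n) (A : Matrix (Fin n) (Fin n) ℝ) (b : ℝ)
    (hb : 0 < b)
    (hspec : ∀ μ ∈ spectrum ℂ (A.map Complex.ofReal), ‖μ‖ < b) :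
    ∃ N : ℕ, 0 < N ∧ ∀ i j, (n : ℝ) * |(A ^ N) i j| ≤ b ^ N := by
  haveI : Nonempty (Fin n) := Fin.pos_iff_nonempty.mp hn
  set M : Matrix (Fin n) (Fin n) ℂ := A.map Complex.ofReal with hMdef
  have hmp : ∀ k : ℕ, M ^ k = (A ^ k).map Complex.ofReal := by
    intro k
    induction k with
    | zero =>
        ext i j
        by_cases hij : i = j <;> simp [hij, Matrix.one_apply, Matrix.map_apply]
    | succ k ih =>
        rw [pow_succ, pow_succ, ih]
        ext i j
        simp [Matrix.mul_apply, Matrix.map_apply]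
        push_cast
        rfl
  have hρ : spectralRadius ℂ M < (b.toNNReal : ℝ≥0∞) := by
    apply spectrum.spectralRadius_lt_of_forall_lt
    intro z hz
    have h1 := hspec z hz
    rw [← NNReal.coe_lt_coe, coe_nnnorm, Real.coe_toNNReal _ hb.le]
    exact h1
  obtain ⟨r, hρr, hrb'⟩ := ENNReal.lt_iff_exists_nnreal_btwn.mp hρ
  have hrb : (r : ℝ) < b := by
    have h1 := ENNReal.coe_lt_coe.mp hrb'
    rw [← Real.coe_toNNReal b hb.le]
    exact_mod_cast h1
  have hr0 : (0:ℝ) ≤ r := r.coe_nonneg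
  have hev := (spectrum.pow_nnnorm_pow_one_div_tendsto_nhds_spectralRadius M).eventually_lt_const hρr
  obtain ⟨K₀, hK₀⟩ := eventually_atTop.mp hev
  have hrbdiv : (r : ℝ) / b < 1 := (div_lt_one hb).mpr hrb
  obtain ⟨K₁, hK₁⟩ := exists_pow_lt_of_lt_one (x := 1 / (n:ℝ)) (by positivity) hrbdiv
  refine ⟨max (max K₀ K₁) 1, lt_of_lt_of_le one_pos (le_max_right _ _), ?_⟩
  set N := max (max K₀ K₁) 1 with hNdef
  have hN0 : (N:ℝ) ≠ 0 := by
    have : 0 < N := lt_of_lt_of_le one_pos (le_max_right _ _)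
    exact_mod_cast this.ne'
  -- norm bound from Gelfand
  have hlt : (‖M ^ N‖₊ : ℝ≥0∞) ^ (1 / (N:ℝ)) < (r : ℝ≥0∞) :=
    hK₀ N (le_trans (le_max_left _ _) (le_max_left _ _))
  have h1 : (‖M ^ N‖₊ : ℝ≥0∞) ≤ (r : ℝ≥0∞) ^ (N : ℕ) := by
    have h2 := pow_le_pow_left₀ zero_le hlt.le N
    rwa [← ENNReal.rpow_natCast ((‖M ^ N‖₊ : ℝ≥0∞) ^ (1 / (N:ℝ))) N, ← ENNReal.rpow_mul,
      one_div, inv_mul_cancel₀ hN0, ENNReal.rpow_one] at h2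
  have h2 : ‖M ^ N‖ ≤ (r:ℝ) ^ N := by
    rw [← ENNReal.coe_pow] at h1
    have := ENNReal.coe_le_coe.mp h1
    exact_mod_cast this
  -- entrywise bound
  have hentry : ∀ i j, |(A ^ N) i j| ≤ (r:ℝ) ^ N := by
    intro i j
    have e1 : ‖(M ^ N) i j‖ = |(A ^ N) i j| := by
      rw [hmp N]; simp [Matrix.map_apply]
    have e2 : ‖(M ^ N) i j‖₊ ≤ ‖M ^ N‖₊ := by
      rw [Matrix.linfty_opNNNorm_def]
      exact le_trans
        (Finset.single_le_sum (f := fun j' => ‖(M ^ N) i j'‖₊) (fun _ _ => zero_le)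
          (Finset.mem_univ j))
        (Finset.le_sup (f := fun i => ∑ j : Fin n, ‖(M ^ N) i j‖₊) (Finset.mem_univ i))
    have e3 : ‖(M ^ N) i j‖ ≤ ‖M ^ N‖ := e2
    rw [e1] at e3
    exact e3.trans h2
  -- combine with smallness of (r/b)^N
  have hpow : ((r:ℝ) / b) ^ N ≤ 1 / (n:ℝ) := by
    refine le_trans ?_ (hK₁.le)
    exact pow_le_pow_of_le_one (by positivity) hrbdiv.le
      (le_trans (le_max_right _ _) (le_max_left _ _))
  intro i j
  have hbN : (0:ℝ) < b ^ N := pow_pos hb N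
  have hrN : (r:ℝ) ^ N = ((r:ℝ)/b) ^ N * b ^ N := by
    rw [div_pow]; field_simp
  have hn' : (0:ℝ) < n := by exact_mod_cast hn
  have key : (n:ℝ) * (r:ℝ) ^ N ≤ b ^ N := by
    rw [hrN]
    have : (n:ℝ) * ((r:ℝ)/b) ^ N ≤ 1 := by
      calc (n:ℝ) * ((r:ℝ)/b) ^ N ≤ (n:ℝ) * (1 / n) := by
            exact mul_le_mul_of_nonneg_left hpow hn'.le
        _ = 1 := by field_simp
    nlinarith
  calc (n:ℝ) * |(A ^ N) i j| ≤ (n:ℝ) * (r:ℝ) ^ N :=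
        mul_le_mul_of_nonneg_left (hentry i j) hn'.le
    _ ≤ b ^ N := key

/-- **Feasibility of the discrete-time Lyapunov SDP.**
If every (complex) eigenvalue of the real matrix `A` has modulus less than `b > 0`,
then there exists a real symmetric positive definite `P` with `P ⪰ I` and
`AᵀPA ⪯ b²P`. -/
theorem discrete_lyapunov_feasible {n : ℕ}
    (A : Matrix (Fin n) (Fin n) ℝ) (b : ℝ) (hb : 0 < b)
    (hspec : ∀ μ ∈ spectrum ℂ (A.map Complex.ofReal), ‖μ‖ < b) :
    ∃ P : Matrix (Fin n) (Fin n) ℝ,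
      P.IsSymm ∧ P.PosDef ∧ (P - 1).PosSemidef ∧
      (b ^ 2 • P - Aᵀ * P * A).PosSemidef := by
  classical
  rcases Nat.eq_zero_or_pos n with hn | hn
  · subst hn
    have hherm0 : ∀ B : Matrix (Fin 0) (Fin 0) ℝ, B.IsHermitian := by
      intro B; ext i j; exact i.elim0
    have hpsd0 : ∀ B : Matrix (Fin 0) (Fin 0) ℝ, B.PosSemidef := by
      intro B
      refine ⟨hherm0 B, fun x => ?_⟩
      rw [Subsingleton.elim x 0]; simp
    refine ⟨1, Matrix.isSymm_one, ⟨hherm0 1, fun x hx => absurd (Subsingleton.elim x 0) hx⟩,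
      hpsd0 _, hpsd0 _⟩
  -- main case
  obtain ⟨N, hN0, hNbound⟩ := exists_good_power hn A b hb hspec
  have hbi : (0:ℝ) < b⁻¹ := inv_pos.mpr hb
  set P : Matrix (Fin n) (Fin n) ℝ :=
    ∑ k ∈ Finset.range N, (b⁻¹) ^ (2 * k) • ((Aᵀ) ^ k * A ^ k) with hPdef
  have hq : ∀ v : Fin n → ℝ, 0 ≤ v ⬝ᵥ v := by
    intro v
    simp only [dotProduct]
    exact Finset.sum_nonneg fun i _ => mul_self_nonneg _
  -- quadratic form of P
  have hterm : ∀ (k : ℕ) (x : Fin n → ℝ),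
      x ⬝ᵥ ((b⁻¹) ^ (2 * k) • ((Aᵀ) ^ k * A ^ k)) *ᵥ x
        = (b⁻¹) ^ (2 * k) * ((A ^ k *ᵥ x) ⬝ᵥ (A ^ k *ᵥ x)) := by
    intro k x
    rw [Matrix.smul_mulVec, dotProduct_smul, smul_eq_mul]
    congr 1
    rw [← Matrix.transpose_pow, ← Matrix.mulVec_mulVec, Matrix.dotProduct_mulVec,
      Matrix.vecMul_transpose]
  have hform : ∀ x : Fin n → ℝ,
      x ⬝ᵥ P *ᵥ x = ∑ k ∈ Finset.range N, (b⁻¹) ^ (2 * k) * ((A ^ k *ᵥ x) ⬝ᵥ (A ^ k *ᵥ x)) := by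
    intro x
    rw [hPdef, dot_mulVec_sum]
    exact Finset.sum_congr rfl fun k _ => hterm k x
  -- P dominates the identity
  have hgeI : ∀ x : Fin n → ℝ, x ⬝ᵥ x ≤ x ⬝ᵥ P *ᵥ x := by
    intro x
    rw [hform]
    have h0 : x ⬝ᵥ x
        = ∑ k ∈ ({0} : Finset ℕ), (b⁻¹) ^ (2 * k) * ((A ^ k *ᵥ x) ⬝ᵥ (A ^ k *ᵥ x)) := by
      simp [Matrix.one_mulVec]
    rw [h0]
    apply Finset.sum_le_sum_of_subset_of_nonneg
    · simpa [Finset.singleton_subset_iff] using hN0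
    · intro k _ _
      exact mul_nonneg (by positivity) (hq _)
  -- symmetry
  have hsymm_term : ∀ k : ℕ, ((Aᵀ) ^ k * A ^ k)ᵀ = (Aᵀ) ^ k * A ^ k := by
    intro k
    rw [Matrix.transpose_mul, Matrix.transpose_pow, Matrix.transpose_pow,
      Matrix.transpose_transpose]
  have hPsymm : P.IsSymm := by
    rw [Matrix.IsSymm, hPdef, Matrix.transpose_sum]
    exact Finset.sum_congr rfl fun k _ => by rw [Matrix.transpose_smul, hsymm_term]
  have hPherm : P.IsHermitian := by
    have : Pᴴ = P := by
      rw [Matrix.conjTranspose_eq_transpose_of_trivial]; exact hPsymm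
    exact this
  -- positive definiteness
  have hPD : P.PosDef := by
    refine Matrix.PosDef.of_dotProduct_mulVec_pos hPherm fun x hx => ?_
    have hx2 : 0 < star x ⬝ᵥ x := Matrix.dotProduct_star_self_pos_iff.mpr hx
    simp only [star_trivial] at hx2 ⊢
    exact lt_of_lt_of_le hx2 (hgeI x)
  -- P - 1 positive semidefinite
  have hPsub : (P - 1).PosSemidef := by
    refine Matrix.PosSemidef.of_dotProduct_mulVec_nonneg (hPherm.sub Matrix.isHermitian_one) fun x => ?_
    simp only [star_trivial, Matrix.sub_mulVec, dotProduct_sub, Matrix.one_mulVec]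
    exact sub_nonneg.mpr (hgeI x)
  -- the Lyapunov inequality
  have hAt : Aᵀ = Aᴴ := (Matrix.conjTranspose_eq_transpose_of_trivial A).symm
  have hherm2 : (b ^ 2 • P - Aᵀ * P * A).IsHermitian := by
    have h5 : (Aᵀ * P * A).IsHermitian := by
      rw [hAt]; exact Matrix.isHermitian_conjTranspose_mul_mul A hPherm
    have h6 : (b ^ 2 • P).IsHermitian := by
      have : (b ^ 2 • P)ᴴ = b ^ 2 • P := by
        rw [Matrix.conjTranspose_smul, star_trivial, hPherm.eq]
      exact this
    exact h6.sub h5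
  refine ⟨P, hPsymm, hPD, hPsub, Matrix.PosSemidef.of_dotProduct_mulVec_nonneg hherm2 fun x => ?_⟩
  simp only [star_trivial, Matrix.sub_mulVec, dotProduct_sub]
  set g : ℕ → ℝ := fun k => (b⁻¹) ^ (2 * k) * ((A ^ k *ᵥ x) ⬝ᵥ (A ^ k *ᵥ x)) with hgdef
  have hc : ∀ k : ℕ, (b⁻¹ : ℝ) ^ (2 * k) = b ^ 2 * (b⁻¹) ^ (2 * (k + 1)) := by
    intro k
    have h7 : 2 * (k + 1) = 2 * k + 2 := by ring
    rw [h7, pow_add]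
    field_simp
  have e1 : x ⬝ᵥ (b ^ 2 • P) *ᵥ x = b ^ 2 * ∑ k ∈ Finset.range N, g k := by
    rw [Matrix.smul_mulVec, dotProduct_smul, smul_eq_mul, hform]
  have e2 : x ⬝ᵥ (Aᵀ * P * A) *ᵥ x = b ^ 2 * ∑ k ∈ Finset.range N, g (k + 1) := by
    have e3 : (Aᵀ * P * A) *ᵥ x = Aᵀ *ᵥ (P *ᵥ (A *ᵥ x)) := by
      rw [Matrix.mulVec_mulVec, Matrix.mulVec_mulVec]
    rw [e3, Matrix.dotProduct_mulVec, Matrix.vecMul_transpose, hform (A *ᵥ x)]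
    rw [Finset.mul_sum]
    refine Finset.sum_congr rfl fun k _ => ?_
    have e4 : A ^ k *ᵥ (A *ᵥ x) = A ^ (k + 1) *ᵥ x := by
      rw [Matrix.mulVec_mulVec, ← pow_succ]
    rw [e4, hgdef]
    simp only
    rw [hc k]; ring
  rw [e1, e2, ← mul_sub]
  have htel : ∑ k ∈ Finset.range N, g k - ∑ k ∈ Finset.range N, g (k + 1) = g 0 - g N := by
    have h1 := Finset.sum_range_succ' g N
    have h2 := Finset.sum_range_succ g N
    rw [h1] at h2
    linarith
  rw [htel]
  have hg0 : g 0 = x ⬝ᵥ x := by simp [hgdef, Matrix.one_mulVec]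
  have hgN : g N ≤ x ⬝ᵥ x := by
    have hquad := quad_bound hn (A ^ N) hNbound x
    have hbN : (0:ℝ) < b ^ N := pow_pos hb N
    have hcoef : (b⁻¹ : ℝ) ^ (2 * N) * (b ^ N) ^ 2 = 1 := by
      rw [← pow_mul, ← mul_comm N 2, inv_pow]
      field_simp
    calc g N ≤ (b⁻¹) ^ (2 * N) * ((b ^ N) ^ 2 * (x ⬝ᵥ x)) := by
          exact mul_le_mul_of_nonneg_left hquad (by positivity)
      _ = ((b⁻¹) ^ (2 * N) * (b ^ N) ^ 2) * (x ⬝ᵥ x) := by ring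
      _ = x ⬝ᵥ x := by rw [hcoef, one_mul]
  have : 0 ≤ g 0 - g N := by rw [hg0]; linarith
  positivity
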